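/- For every x ∈ ℝ^d with nonnegative coordinates, every real p ≥ 2, every u ∈ ℝ and every index k, |‖x + u e_k‖_p - ‖x‖_p| ≤ p |u| ((x_k + |u|) / (2‖x‖_p^p + |u|^p)^{1/p})^{p-1}, provided x + u e_k also has nonnegative coordinates. -/

import Mathlib

/-- The ℓ^p norm of a vector in ℝ^d, using real powers. -/
noncomputable def lpNorm {d : ℕ} (p : ℝ) (x : Fin d → ℝ) : ℝ :=
  (∑ k : Fin d, |x k| ^ p) ^ (1 / p)

open Real

lemma superadd {x y z : ℝ} (hx : 0 ≤ x) (hy : 0 ≤ y) (hz : 1 ≤ z) :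
    x ^ z + y ^ z ≤ (x + y) ^ z := by
  have hz0 : z ≠ 0 := by linarith
  have hxy : 0 ≤ x + y := by linarith
  have h1 : x ^ z = x ^ (1:ℝ) * x ^ (z - 1) := by
    rw [← Real.rpow_add' hx (by simpa using hz0)]; ring_nf
  have h2 : y ^ z = y ^ (1:ℝ) * y ^ (z - 1) := by
    rw [← Real.rpow_add' hy (by simpa using hz0)]; ring_nf
  have h3 : (x + y) ^ z = (x + y) ^ (1:ℝ) * (x + y) ^ (z - 1) := by
    rw [← Real.rpow_add' hxy (by simpa using hz0)]; ring_nf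
  rw [h1, h2, h3, Real.rpow_one, Real.rpow_one, Real.rpow_one]
  have e1 : x ^ (z-1) ≤ (x+y) ^ (z-1) := Real.rpow_le_rpow hx (by linarith) (by linarith)
  have e2 : y ^ (z-1) ≤ (x+y) ^ (z-1) := Real.rpow_le_rpow hy (by linarith) (by linarith)
  have := Real.rpow_nonneg hx (z-1)
  have := Real.rpow_nonneg hy (z-1)
  nlinarith

lemma holder2 {p q A s T : ℝ} (hpq : p.HolderConjugate q) (hA : 0 ≤ A) (hs : 0 ≤ s) (hT : 0 ≤ T) :
    A + s * T ≤ (A + s ^ p) ^ (1/p) * (A + T ^ q) ^ (1/q) := by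
  have hp0 : p ≠ 0 := hpq.pos.ne'
  have hq0 : q ≠ 0 := hpq.symm.pos.ne'
  have key := Real.inner_le_Lp_mul_Lq_of_nonneg (Finset.univ : Finset (Fin 2))
    (f := ![A ^ (1/p), s]) (g := ![A ^ (1/q), T]) hpq
    (by intro i _; fin_cases i <;> simp [Real.rpow_nonneg hA, hs])
    (by intro i _; fin_cases i <;> simp [Real.rpow_nonneg hA, hT])
  have hconj : 1/p + 1/q = 1 := by
    rw [one_div, one_div]; exact hpq.inv_add_inv_eq_one
  have e0 : A ^ p⁻¹ * A ^ q⁻¹ = A := by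
    rw [← Real.rpow_add' hA (by rw [← one_div, ← one_div, hconj]; norm_num), ← one_div, ← one_div, hconj, Real.rpow_one]
  have e1 : (A ^ p⁻¹) ^ p = A := by
    rw [← Real.rpow_mul hA, inv_mul_cancel₀ hp0, Real.rpow_one]
  have e2 : (A ^ q⁻¹) ^ q = A := by
    rw [← Real.rpow_mul hA, inv_mul_cancel₀ hq0, Real.rpow_one]
  simpa [Fin.sum_univ_two, e0, e1, e2] using key

lemma keylem {p A s t : ℝ} (hp : 2 ≤ p) (hA : 0 ≤ A) (hs : 0 ≤ s) (ht : 0 ≤ t) :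
    ((A + t ^ p) ^ (1/p)) ^ (p-1) * ((A + t ^ p) ^ (1/p) - (A + s ^ p) ^ (1/p)) ≤
      (t - s) * t ^ (p-1) := by
  have hp0 : (0:ℝ) < p := by linarith
  have hq : p.HolderConjugate (p/(p-1)) := (Real.holderConjugate_iff_eq_conjExponent (by linarith)).2 rfl
  have hT : 0 ≤ t ^ (p-1) := Real.rpow_nonneg ht _
  have hAt : (0:ℝ) ≤ A + t ^ p := by positivity
  have h1 : (t ^ (p-1)) ^ (p/(p-1)) = t ^ p := by
    rw [← Real.rpow_mul ht]; congr 1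
    have : p - 1 ≠ 0 := by linarith
    field_simp
  have hold := holder2 (T := t ^ (p-1)) hq hA hs hT
  rw [h1] at hold
  have h2 : (1:ℝ)/(p/(p-1)) = (p-1)/p := by
    rw [one_div_div]
  rw [h2] at hold
  have ha : ((A + t^p)^(1/p))^(p-1) = (A + t^p)^((p-1)/p) := by
    rw [← Real.rpow_mul hAt]; congr 1; field_simp
  have haa : ((A + t^p)^(1/p))^(p-1) * ((A + t^p)^(1/p)) = A + t^p := by
    rw [ha, ← Real.rpow_add' hAt (by field_simp; rw [sub_add_cancel, div_self hp0.ne']; norm_num)]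
    rw [show (p-1)/p + 1/p = 1 by field_simp; ring, Real.rpow_one]
  have ht2 : t ^ p = t * t ^ (p-1) := by
    rw [← Real.rpow_one_add' ht (by simpa using hp0.ne')]; ring_nf
  have expand : ((A + t ^ p) ^ (1/p)) ^ (p-1) * ((A + t ^ p) ^ (1/p) - (A + s ^ p) ^ (1/p))
      = (A + t^p) - (A + t^p)^((p-1)/p) * (A + s^p)^(1/p) := by
    rw [mul_sub, haa, ha]
  rw [expand]
  have hts : (t - s) * t^(p-1) = t^p - s * t^(p-1) := by rw [ht2]; ring
  rw [hts]
  linarith [hold]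

lemma core {p A s t : ℝ} (hp : 2 ≤ p) (hA : 0 ≤ A) (hs : 0 ≤ s) (ht : 0 ≤ t) :
    |(A + t ^ p) ^ (1/p) - (A + s ^ p) ^ (1/p)| ≤
      p * |t - s| * ((s + |t - s|) / (2 * (A + s ^ p) + |t - s| ^ p) ^ (1/p)) ^ (p - 1) := by
  have hp0 : (0:ℝ) < p := by linarith
  have hp1 : (1:ℝ) ≤ p := by linarith
  have hexp : (0:ℝ) ≤ (p-1)/p := div_nonneg (by linarith) hp0.le
  rcases eq_or_ne t s with rfl | hne
  · simp
  have hv0 : 0 < |t - s| := abs_pos.mpr (sub_ne_zero.mpr hne)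
  set v := |t - s| with hv
  set B := A + s ^ p with hB
  have hBnn : 0 ≤ B := by positivity
  set D := 2 * B + v ^ p with hD
  have hvp_pos : 0 < v ^ p := Real.rpow_pos_of_pos hv0 p
  have hDpos : 0 < D := by rw [hD]; linarith
  have hsv : 0 ≤ s + v := by positivity
  have hfrac : ((s + v) / D ^ (1/p)) ^ (p-1) = (s+v)^(p-1) / D ^ ((p-1)/p) := by
    rw [Real.div_rpow hsv (Real.rpow_nonneg hDpos.le _), ← Real.rpow_mul hDpos.le]
    congr 2
    field_simp
  rw [hfrac, ← mul_div_assoc, le_div_iff₀ (Real.rpow_pos_of_pos hDpos ((p-1)/p))]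
  rcases le_or_gt s t with hst | hst
  · -- case s ≤ t
    have hvt : v = t - s := by rw [hv, abs_of_nonneg (by linarith)]
    have hsvt : s + v = t := by rw [hvt]; ring
    have hstp : s ^ p ≤ t ^ p := Real.rpow_le_rpow hs hst hp0.le
    have hAt : (0:ℝ) ≤ A + t ^ p := by positivity
    have hab : (A + s ^ p) ^ (1/p) ≤ (A + t ^ p) ^ (1/p) :=
      Real.rpow_le_rpow (by positivity) (by linarith) (by positivity)
    rw [abs_of_nonneg (sub_nonneg.mpr hab)]
    have hsup : s ^ p + v ^ p ≤ t ^ p := by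
      have h := superadd hs hv0.le hp1
      rwa [hsvt] at h
    have hD2 : D ≤ 2 * (A + t ^ p) := by
      rw [hD, hB]
      have h0 : 0 ≤ s ^ p := Real.rpow_nonneg hs p
      linarith
    have hae : ((A + t ^ p) ^ (1/p)) ^ (p-1) = (A + t ^ p) ^ ((p-1)/p) := by
      rw [← Real.rpow_mul hAt]; congr 1; field_simp
    have hanneg : 0 ≤ ((A + t ^ p) ^ (1/p)) ^ (p-1) :=
      Real.rpow_nonneg (Real.rpow_nonneg hAt _) _
    have hDle : D ^ ((p-1)/p) ≤ p * ((A + t ^ p) ^ (1/p)) ^ (p-1) := by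
      calc D ^ ((p-1)/p) ≤ (2 * (A + t ^ p)) ^ ((p-1)/p) :=
            Real.rpow_le_rpow hDpos.le hD2 hexp
        _ = 2 ^ ((p-1)/p) * (A + t ^ p) ^ ((p-1)/p) := Real.mul_rpow (by norm_num) hAt
        _ ≤ 2 * (A + t ^ p) ^ ((p-1)/p) := by
            have h2le : (2:ℝ) ^ ((p-1)/p) ≤ 2 ^ (1:ℝ) :=
              Real.rpow_le_rpow_of_exponent_le one_le_two
                (by rw [div_le_one hp0]; linarith)
            rw [Real.rpow_one] at h2le
            exact mul_le_mul_of_nonneg_right h2le (Real.rpow_nonneg hAt _)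
        _ ≤ p * ((A + t ^ p) ^ (1/p)) ^ (p-1) := by
            rw [hae]
            exact mul_le_mul_of_nonneg_right (by linarith) (Real.rpow_nonneg hAt _)
    have hkey := keylem hp hA hs ht
    have hba : 0 ≤ (A + t ^ p) ^ (1/p) - (A + s ^ p) ^ (1/p) := sub_nonneg.mpr hab
    rw [hsvt, hvt]
    calc ((A + t ^ p) ^ (1/p) - (A + s ^ p) ^ (1/p)) * D ^ ((p-1)/p)
        ≤ ((A + t ^ p) ^ (1/p) - (A + s ^ p) ^ (1/p)) * (p * ((A + t ^ p) ^ (1/p)) ^ (p-1)) :=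
          mul_le_mul_of_nonneg_left hDle hba
      _ = p * (((A + t ^ p) ^ (1/p)) ^ (p-1) * ((A + t ^ p) ^ (1/p) - (A + s ^ p) ^ (1/p))) := by
          ring
      _ ≤ p * ((t - s) * t ^ (p-1)) := mul_le_mul_of_nonneg_left hkey hp0.le
      _ = p * (t - s) * t ^ (p-1) := by ring
  · -- case t < s
    have hvt : v = s - t := by rw [hv, abs_sub_comm, abs_of_nonneg (by linarith)]
    have hs0 : 0 < s := lt_of_le_of_lt ht hst
    have hBpos : 0 < B := by
      rw [hB]; have := Real.rpow_pos_of_pos hs0 p; linarith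
    have hbpos : 0 < B ^ (1/p) := Real.rpow_pos_of_pos hBpos _
    have htsp : t ^ p ≤ s ^ p := Real.rpow_le_rpow ht hst.le hp0.le
    have hab : (A + t ^ p) ^ (1/p) ≤ (A + s ^ p) ^ (1/p) :=
      Real.rpow_le_rpow (by positivity) (by linarith) (by positivity)
    rw [abs_of_nonpos (sub_nonpos.mpr hab), neg_sub]
    have hK1 := keylem hp hA ht hs
    rw [show s - t = v by rw [hvt]] at hK1
    -- hK1 : (B^(1/p))^(p-1) * (B^(1/p) - (A+t^p)^(1/p)) ≤ v * s^(p-1)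
    have hvs : v ≤ s := by rw [hvt]; linarith
    have hvps : v ^ p ≤ s ^ p := Real.rpow_le_rpow hv0.le hvs hp0.le
    have hspB : s ^ p ≤ B := by rw [hB]; linarith
    have hsup2 : s ^ p + v ^ p ≤ (s + v) ^ p := superadd hs hv0.le hp1
    have hDs : D * s ^ p ≤ 2 * (B * (s + v) ^ p) := by
      have h1 : 2 * B * (s ^ p + v ^ p) ≤ 2 * B * (s + v) ^ p :=
        mul_le_mul_of_nonneg_left hsup2 (by linarith)
      have h2 : s ^ p * v ^ p ≤ B * v ^ p :=
        mul_le_mul_of_nonneg_right hspB hvp_pos.le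
      have h3 : 0 ≤ B * v ^ p := mul_nonneg hBnn hvp_pos.le
      have h5 : (2 * B + v ^ p) * s ^ p = 2 * B * s ^ p + s ^ p * v ^ p := by ring
      have h6 : 2 * B * s ^ p + 2 * (B * v ^ p) = 2 * B * (s ^ p + v ^ p) := by ring
      have h7 : 2 * B * (s + v) ^ p = 2 * (B * (s + v) ^ p) := by ring
      rw [hD, h5]
      linarith
    have hsp1 : (s ^ p) ^ ((p-1)/p) = s ^ (p-1) := by
      rw [← Real.rpow_mul hs]; congr 1; field_simp
    have hBp1 : B ^ ((p-1)/p) = (B ^ (1/p)) ^ (p-1) := by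
      rw [← Real.rpow_mul hBnn]; congr 1; field_simp
    have hsvp1 : ((s + v) ^ p) ^ ((p-1)/p) = (s + v) ^ (p-1) := by
      rw [← Real.rpow_mul hsv]; congr 1; field_simp
    have hK2 : D ^ ((p-1)/p) * s ^ (p-1) ≤ 2 * ((B ^ (1/p)) ^ (p-1) * (s + v) ^ (p-1)) := by
      have e1 : D ^ ((p-1)/p) * s ^ (p-1) = (D * s ^ p) ^ ((p-1)/p) := by
        rw [Real.mul_rpow hDpos.le (Real.rpow_nonneg hs p), hsp1]
      have e2 : (2 * (B * (s + v) ^ p)) ^ ((p-1)/p)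
          = 2 ^ ((p-1)/p) * (B ^ ((p-1)/p) * ((s + v) ^ p) ^ ((p-1)/p)) := by
        rw [Real.mul_rpow (by norm_num) (by positivity),
          Real.mul_rpow hBnn (Real.rpow_nonneg hsv p)]
      have h2le : (2:ℝ) ^ ((p-1)/p) ≤ 2 := by
        have := Real.rpow_le_rpow_of_exponent_le one_le_two
          (show (p-1)/p ≤ 1 by rw [div_le_one hp0]; linarith)
        rwa [Real.rpow_one] at this
      calc D ^ ((p-1)/p) * s ^ (p-1) = (D * s ^ p) ^ ((p-1)/p) := e1
        _ ≤ (2 * (B * (s + v) ^ p)) ^ ((p-1)/p) :=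
            Real.rpow_le_rpow (by positivity) hDs hexp
        _ = 2 ^ ((p-1)/p) * (B ^ ((p-1)/p) * ((s + v) ^ p) ^ ((p-1)/p)) := e2
        _ ≤ 2 * ((B ^ (1/p)) ^ (p-1) * (s + v) ^ (p-1)) := by
            rw [hBp1, hsvp1]
            have hnn : 0 ≤ (B ^ (1/p)) ^ (p-1) * (s + v) ^ (p-1) :=
              mul_nonneg (Real.rpow_nonneg hbpos.le _) (Real.rpow_nonneg hsv _)
            have h2le' := mul_le_mul_of_nonneg_right h2le hnn
            linarith [h2le', mul_assoc ((2:ℝ) ^ ((p-1)/p)) ((B ^ (1/p)) ^ (p-1)) ((s + v) ^ (p-1))]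
    have hbp1pos : 0 < (B ^ (1/p)) ^ (p-1) := Real.rpow_pos_of_pos hbpos _
    apply le_of_mul_le_mul_right _ hbp1pos
    have hDqnn : 0 ≤ D ^ ((p-1)/p) := Real.rpow_nonneg hDpos.le _
    calc ((A + s ^ p) ^ (1/p) - (A + t ^ p) ^ (1/p)) * D ^ ((p-1)/p) * (B ^ (1/p)) ^ (p-1)
        = D ^ ((p-1)/p) * ((B ^ (1/p)) ^ (p-1) * (B ^ (1/p) - (A + t ^ p) ^ (1/p))) := by
          rw [hB]; ring
      _ ≤ D ^ ((p-1)/p) * (v * s ^ (p-1)) := mul_le_mul_of_nonneg_left hK1 hDqnn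
      _ = v * (D ^ ((p-1)/p) * s ^ (p-1)) := by ring
      _ ≤ v * (2 * ((B ^ (1/p)) ^ (p-1) * (s + v) ^ (p-1))) :=
          mul_le_mul_of_nonneg_left hK2 hv0.le
      _ ≤ v * (p * ((B ^ (1/p)) ^ (p-1) * (s + v) ^ (p-1))) := by
          have hnn : 0 ≤ (B ^ (1/p)) ^ (p-1) * (s + v) ^ (p-1) :=
            mul_nonneg hbp1pos.le (Real.rpow_nonneg hsv _)
          exact mul_le_mul_of_nonneg_left (mul_le_mul_of_nonneg_right hp hnn) hv0.le
      _ = p * v * (s + v) ^ (p-1) * (B ^ (1/p)) ^ (p-1) := by ring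

theorem stmt_15 (d : ℕ) (x : Fin d → ℝ) (hx : ∀ i, 0 ≤ x i)
    (p : ℝ) (hp : 2 ≤ p) (u : ℝ) (k : Fin d)
    (hxu : ∀ i, 0 ≤ ((x + Pi.single k u : Fin d → ℝ) i)) :
    |lpNorm p (x + Pi.single k u) - lpNorm p x| ≤
      p * |u| * ((x k + |u|) / (2 * (lpNorm p x) ^ p + |u| ^ p) ^ (1 / p)) ^ (p - 1) := by
  have hp0 : (0:ℝ) < p := by linarith
  set A := ∑ i ∈ Finset.univ.erase k, |x i| ^ p with hAdef
  have hA : 0 ≤ A := Finset.sum_nonneg fun i _ => Real.rpow_nonneg (abs_nonneg _) _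
  have hxk := hx k
  have ht : 0 ≤ x k + u := by
    have h := hxu k
    simpa using h
  have hsum1 : ∑ i : Fin d, |x i| ^ p = A + x k ^ p := by
    rw [hAdef, ← Finset.add_sum_erase _ _ (Finset.mem_univ k), abs_of_nonneg hxk]; ring
  have hsum2 : ∑ i : Fin d, |((x + Pi.single k u : Fin d → ℝ)) i| ^ p = A + (x k + u) ^ p := by
    rw [← Finset.add_sum_erase _ _ (Finset.mem_univ k)]
    have e1 : |((x + Pi.single k u : Fin d → ℝ)) k| ^ p = (x k + u) ^ p := by
      congr 1
      rw [abs_of_nonneg (hxu k)]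
      simp
    have e2 : ∀ i ∈ Finset.univ.erase k, |((x + Pi.single k u : Fin d → ℝ)) i| ^ p = |x i| ^ p := by
      intro i hi
      have hik : i ≠ k := Finset.ne_of_mem_erase hi
      have : ((x + Pi.single k u : Fin d → ℝ)) i = x i := by
        simp [Pi.single_eq_of_ne hik]
      rw [this]
    rw [e1, Finset.sum_congr rfl e2, hAdef]; ring
  have hnorm1 : lpNorm p x = (A + x k ^ p) ^ (1/p) := by
    simp only [lpNorm]; rw [hsum1]
  have hnorm2 : lpNorm p (x + Pi.single k u) = (A + (x k + u) ^ p) ^ (1/p) := by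
    simp only [lpNorm]; rw [hsum2]
  have hpow : lpNorm p x ^ p = A + x k ^ p := by
    rw [hnorm1, ← Real.rpow_mul (by positivity), one_div, inv_mul_cancel₀ hp0.ne',
      Real.rpow_one]
  have h := core (p := p) (A := A) (s := x k) (t := x k + u) hp hA hxk ht
  rw [hnorm2, hpow, hnorm1]
  simpa using h
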